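/- Let L be a countably infinite discrete abelian group with compact dual L̂ whose Haar measure is normalized to total mass 1. If Γ ⊂ L is a nonempty finite set and M is a finite subgroup of L, then ∫_{M^⊥} g_Γ(τ) dτ = card{(k,k') ∈ Γ×Γ : k−k' ∈ M} / (card(M)·card(Γ)), where M^⊥ = {τ ∈ L̂ : e(k,τ) = 1 for all k ∈ M}. -/

import Mathlib

open MeasureTheory
open scoped ENNReal Classical

noncomputable section

variable {L : Type*} [AddCommGroup L] [TopologicalSpace L]

set_option linter.unusedSectionVars false

/-- The bi-character `e(k,τ) = τ(k)` of a discrete abelian group `L`, valued in `ℂ`. -/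
def bichar (k : L) (τ : PontryaginDual (Multiplicative L)) : ℂ :=
  (τ (Multiplicative.ofAdd k) : ℂ)

/-- `g_Γ(τ) = (1/card Γ)·|∑_{k∈Γ} e(k,τ)|²`. -/
def gfun (Γ : Finset L) (τ : PontryaginDual (Multiplicative L)) : ℝ :=
  (Γ.card : ℝ)⁻¹ * ‖∑ k ∈ Γ, bichar k τ‖ ^ 2

/-- The orthogonal complement `M^⊥ = {τ ∈ L̂ : e(k,τ) = 1 for all k ∈ M}` of a subgroup `M`. -/
def perpSet (M : AddSubgroup L) : Set (PontryaginDual (Multiplicative L)) :=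
  {τ | ∀ k ∈ M, bichar k τ = 1}

lemma bichar_add (a b : L) (τ : PontryaginDual (Multiplicative L)) :
    bichar (a + b) τ = bichar a τ * bichar b τ := by
  unfold bichar
  rw [ofAdd_add, map_mul, Circle.coe_mul]

lemma bichar_zero (τ : PontryaginDual (Multiplicative L)) : bichar (0 : L) τ = 1 := by
  unfold bichar; rw [ofAdd_zero, map_one, Circle.coe_one]

lemma norm_bichar (k : L) (τ : PontryaginDual (Multiplicative L)) : ‖bichar k τ‖ = 1 := by
  exact Circle.norm_coe _

lemma conj_bichar (k : L) (τ : PontryaginDual (Multiplicative L)) :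
    (starRingEnd ℂ) (bichar k τ) = bichar (-k) τ := by
  unfold bichar
  rw [ofAdd_neg, map_inv, ← Circle.coe_inv_eq_conj]

lemma bichar_mul_apply (k : L) (σ τ : PontryaginDual (Multiplicative L)) :
    bichar k (σ * τ) = bichar k σ * bichar k τ := rfl

lemma continuous_bichar (k : L) :
    Continuous fun τ : PontryaginDual (Multiplicative L) => bichar k τ := by
  have h1 : Continuous fun f : C(Multiplicative L, Circle) => f (Multiplicative.ofAdd k) :=
    continuous_eval_const _
  exact continuous_subtype_val.comp
    (h1.comp (ContinuousMonoidHom.isInducing_toContinuousMap _ _).continuous)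

lemma exists_char_ne_one [DiscreteTopology L] (m : L) (hm : m ≠ 0) :
    ∃ τ : PontryaginDual (Multiplicative L), bichar m τ ≠ 1 := by
  obtain ⟨c, hc⟩ := CharacterModule.exists_character_apply_ne_zero_of_ne_zero (A := L) hm
  have hle : AddSubgroup.zmultiples (1 : ℚ) ≤
      (AddSubgroup.zmultiples (1 : ℝ)).comap (Rat.castHom ℝ).toAddMonoidHom := by
    rintro q ⟨n, rfl⟩
    exact ⟨n, by push_cast; simp⟩
  let qmap : AddCircle (1 : ℚ) →+ AddCircle (1 : ℝ) :=
    QuotientAddGroup.map _ _ (Rat.castHom ℝ).toAddMonoidHom hle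
  have hqinj : ∀ x : AddCircle (1 : ℚ), qmap x = 0 → x = 0 := by
    intro x hx
    induction x using QuotientAddGroup.induction_on with
    | H q =>
      have : ((q : ℝ) : AddCircle (1:ℝ)) = 0 := hx
      rw [QuotientAddGroup.eq_zero_iff] at this ⊢
      obtain ⟨n, hn⟩ := this
      refine ⟨n, ?_⟩
      have hn' : ((n : ℚ) : ℝ) = (q : ℝ) := by
        simp only [zsmul_eq_mul, mul_one] at hn; push_cast; exact hn
      have h2 : (n : ℚ) = q := by exact_mod_cast hn'
      simpa [zsmul_eq_mul] using h2
  let χ : AddChar L Circle :=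
    (AddCircle.toCircle_addChar.compAddMonoidHom qmap).compAddMonoidHom c
  refine ⟨⟨χ.toMonoidHom, continuous_of_discreteTopology⟩, ?_⟩
  have hval : bichar m ⟨χ.toMonoidHom, continuous_of_discreteTopology⟩
      = (AddCircle.toCircle (qmap (c m)) : ℂ) := rfl
  rw [hval]
  intro h
  have h1 : AddCircle.toCircle (qmap (c m)) = 1 := by ext; exact h
  have h0 : AddCircle.toCircle (0 : AddCircle (1:ℝ)) = 1 := AddCircle.toCircle_zero
  have := AddCircle.injective_toCircle (T := (1:ℝ)) one_ne_zero (h1.trans h0.symm)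
  exact hc (hqinj _ this)

lemma integrable_bichar
    [MeasurableSpace (PontryaginDual (Multiplicative L))]
    [BorelSpace (PontryaginDual (Multiplicative L))]
    (μ : Measure (PontryaginDual (Multiplicative L))) [IsProbabilityMeasure μ] (k : L) :
    Integrable (fun τ => bichar k τ) μ := by
  refine ⟨(continuous_bichar k).aestronglyMeasurable, ?_⟩
  exact HasFiniteIntegral.of_bounded (C := 1) (ae_of_all _ fun τ => le_of_eq (norm_bichar k τ))

lemma integral_bichar
    [DiscreteTopology L]
    [MeasurableSpace (PontryaginDual (Multiplicative L))]
    [BorelSpace (PontryaginDual (Multiplicative L))]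
    (μ : Measure (PontryaginDual (Multiplicative L))) [μ.IsHaarMeasure] [IsProbabilityMeasure μ]
    (m : L) :
    ∫ τ, bichar m τ ∂μ = if m = 0 then 1 else 0 := by
  by_cases hm : m = 0
  · subst hm
    simp [bichar_zero]
  · rw [if_neg hm]
    obtain ⟨σ, hσ⟩ := exists_char_ne_one m hm
    have key : ∫ τ, bichar m (σ * τ) ∂μ = ∫ τ, bichar m τ ∂μ :=
      integral_mul_left_eq_self (fun τ => bichar m τ) σ
    simp_rw [bichar_mul_apply, integral_const_mul] at key
    have : (bichar m σ - 1) * ∫ τ, bichar m τ ∂μ = 0 := by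
      rw [sub_mul, one_mul, key, sub_self]
    rcases mul_eq_zero.mp this with h | h
    · exact absurd (sub_eq_zero.mp h) hσ
    · exact h

lemma isClosed_perpSet (M : AddSubgroup L) : IsClosed (perpSet (L := L) M) := by
  have : perpSet (L := L) M = ⋂ k ∈ (M : Set L), {τ | bichar k τ = 1} := by
    ext τ; simp [perpSet]
  rw [this]
  exact isClosed_biInter fun k _ => isClosed_eq (continuous_bichar k) continuous_const

lemma sum_bichar_eq (M : AddSubgroup L) (hM : (M : Set L).Finite)
    (τ : PontryaginDual (Multiplicative L)) :
    ∑ m ∈ hM.toFinset, bichar m τ =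
      if τ ∈ perpSet M then (hM.toFinset.card : ℂ) else 0 := by
  by_cases hτ : τ ∈ perpSet M
  · rw [if_pos hτ]
    rw [Finset.sum_congr rfl fun m hm => hτ m (by simpa using hm)]
    simp
  · rw [if_neg hτ]
    obtain ⟨m0, hm0M, hm0⟩ : ∃ m0 ∈ M, bichar m0 τ ≠ 1 := by
      by_contra h
      push_neg at h
      exact hτ fun k hk => h k hk
    set S := ∑ m ∈ hM.toFinset, bichar m τ with hS
    have hstep : bichar m0 τ * S = S := by
      rw [hS, Finset.mul_sum]
      simp_rw [← bichar_add]
      refine Finset.sum_nbij' (fun m => m0 + m) (fun m => -m0 + m) ?_ ?_ ?_ ?_ ?_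
      · intro a ha
        simp only [Set.Finite.mem_toFinset, SetLike.mem_coe] at ha ⊢
        exact M.add_mem hm0M ha
      · intro a ha
        simp only [Set.Finite.mem_toFinset, SetLike.mem_coe] at ha ⊢
        exact M.add_mem (M.neg_mem hm0M) ha
      · intro a _; exact neg_add_cancel_left m0 a
      · intro a _; exact add_neg_cancel_left m0 a
      · intro a _; rfl
    have : (bichar m0 τ - 1) * S = 0 := by rw [sub_mul, one_mul, hstep, sub_self]
    rcases mul_eq_zero.mp this with h | h
    · exact absurd (sub_eq_zero.mp h) hm0
    · exact h

lemma setIntegral_bichar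
    [DiscreteTopology L]
    [MeasurableSpace (PontryaginDual (Multiplicative L))]
    [BorelSpace (PontryaginDual (Multiplicative L))]
    (μ : Measure (PontryaginDual (Multiplicative L))) [μ.IsHaarMeasure] [IsProbabilityMeasure μ]
    (M : AddSubgroup L) (hM : (M : Set L).Finite) (d : L) :
    ∫ τ in perpSet M, bichar d τ ∂μ =
      if d ∈ M then (hM.toFinset.card : ℂ)⁻¹ else 0 := by
  have hcard : (0 : ℕ) < hM.toFinset.card := by
    rw [Finset.card_pos]
    exact ⟨0, hM.mem_toFinset.mpr M.zero_mem⟩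
  have hcard' : (hM.toFinset.card : ℂ) ≠ 0 := Nat.cast_ne_zero.mpr hcard.ne'
  have hmeas : MeasurableSet (perpSet (L := L) M) := (isClosed_perpSet M).measurableSet
  have hind : ∀ τ, (perpSet M).indicator (fun τ => bichar d τ) τ =
      (hM.toFinset.card : ℂ)⁻¹ * ∑ m ∈ hM.toFinset, bichar (m + d) τ := by
    intro τ
    have hsum : ∑ m ∈ hM.toFinset, bichar (m + d) τ =
        (if τ ∈ perpSet M then (hM.toFinset.card : ℂ) else 0) * bichar d τ := by
      simp_rw [bichar_add, ← Finset.sum_mul, sum_bichar_eq M hM τ]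
    rw [hsum]
    by_cases hτ : τ ∈ perpSet M
    · rw [Set.indicator_of_mem hτ, if_pos hτ]
      field_simp
    · rw [Set.indicator_of_notMem hτ, if_neg hτ, zero_mul, mul_zero]
  rw [← integral_indicator hmeas]
  calc ∫ τ, (perpSet M).indicator (fun τ => bichar d τ) τ ∂μ
      = ∫ τ, (hM.toFinset.card : ℂ)⁻¹ * ∑ m ∈ hM.toFinset, bichar (m + d) τ ∂μ := by
        exact integral_congr_ae (ae_of_all _ hind)
    _ = (hM.toFinset.card : ℂ)⁻¹ * ∑ m ∈ hM.toFinset, ∫ τ, bichar (m + d) τ ∂μ := by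
        rw [integral_const_mul, integral_finset_sum _ fun m _ => integrable_bichar μ (m + d)]
    _ = (hM.toFinset.card : ℂ)⁻¹ * ∑ m ∈ hM.toFinset, (if m + d = 0 then 1 else 0) := by
        simp_rw [integral_bichar]
    _ = if d ∈ M then (hM.toFinset.card : ℂ)⁻¹ else 0 := by
        have : ∑ m ∈ hM.toFinset, (if m + d = 0 then (1:ℂ) else 0) =
            if d ∈ M then 1 else 0 := by
          simp only [add_eq_zero_iff_eq_neg]
          rw [Finset.sum_ite_eq' hM.toFinset (-d) (fun _ => (1:ℂ))]
          simp [Set.Finite.mem_toFinset, neg_mem_iff]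
        rw [this]
        by_cases hd : d ∈ M <;> simp [hd]

/-- If `Γ ⊆ L` is a nonempty finite set and `M` is a finite subgroup of the countably infinite
discrete abelian group `L`, then
`∫_{M^⊥} g_Γ(τ) dτ = card{(k,k') ∈ Γ×Γ : k−k' ∈ M} / (card M · card Γ)`. -/
theorem integral_gfun_over_perp
    [DiscreteTopology L] [Countable L] [Infinite L]
    [MeasurableSpace (PontryaginDual (Multiplicative L))]
    [BorelSpace (PontryaginDual (Multiplicative L))]
    (μ : Measure (PontryaginDual (Multiplicative L))) [μ.IsHaarMeasure] [IsProbabilityMeasure μ]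
    (Γ : Finset L) (hΓ : Γ.Nonempty) (M : AddSubgroup L) (hM : (M : Set L).Finite) :
    ∫ τ in perpSet M, gfun Γ τ ∂μ =
      (((Γ ×ˢ Γ).filter (fun p => p.1 - p.2 ∈ M)).card : ℝ) /
        ((hM.toFinset.card : ℝ) * (Γ.card : ℝ)) := by
  have hΓc : (Γ.card : ℂ) ≠ 0 := Nat.cast_ne_zero.mpr (Finset.card_ne_zero_of_mem hΓ.choose_spec)
  have hMcard : (0:ℕ) < hM.toFinset.card := by
    rw [Finset.card_pos]; exact ⟨0, hM.mem_toFinset.mpr M.zero_mem⟩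
  have hMc : (hM.toFinset.card : ℂ) ≠ 0 := Nat.cast_ne_zero.mpr hMcard.ne'
  -- complexify gfun
  have hgc : ∀ τ, ((gfun Γ τ : ℝ) : ℂ) =
      (Γ.card : ℂ)⁻¹ * ∑ p ∈ Γ ×ˢ Γ, bichar (p.1 - p.2) τ := by
    intro τ
    set S := ∑ k ∈ Γ, bichar k τ with hSdef
    have h1 : ((‖S‖ ^ 2 : ℝ) : ℂ) = S * (starRingEnd ℂ) S := by
      rw [Complex.mul_conj, Complex.normSq_eq_norm_sq]
    have h2 : (starRingEnd ℂ) S = ∑ k ∈ Γ, bichar (-k) τ := by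
      rw [hSdef, map_sum]
      exact Finset.sum_congr rfl fun k _ => conj_bichar k τ
    have h3 : S * (starRingEnd ℂ) S = ∑ p ∈ Γ ×ˢ Γ, bichar (p.1 - p.2) τ := by
      rw [h2, hSdef, Finset.sum_mul_sum, ← Finset.sum_product']
      exact Finset.sum_congr rfl fun p _ => by rw [← bichar_add, sub_eq_add_neg]
    unfold gfun
    rw [Complex.ofReal_mul, h1, h3, Complex.ofReal_inv, Complex.ofReal_natCast]
  -- the complex set integral
  have hkey : ∫ τ in perpSet M, ((gfun Γ τ : ℝ) : ℂ) ∂μ =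
      (Γ.card : ℂ)⁻¹ * (((Γ ×ˢ Γ).filter (fun p => p.1 - p.2 ∈ M)).card : ℂ) *
        (hM.toFinset.card : ℂ)⁻¹ := by
    calc ∫ τ in perpSet M, ((gfun Γ τ : ℝ) : ℂ) ∂μ
        = ∫ τ in perpSet M, (Γ.card : ℂ)⁻¹ * ∑ p ∈ Γ ×ˢ Γ, bichar (p.1 - p.2) τ ∂μ := by
          exact integral_congr_ae (ae_of_all _ fun τ => hgc τ)
      _ = (Γ.card : ℂ)⁻¹ * ∑ p ∈ Γ ×ˢ Γ, ∫ τ in perpSet M, bichar (p.1 - p.2) τ ∂μ := by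
          rw [integral_const_mul,
            integral_finset_sum _ fun p _ => (integrable_bichar μ (p.1 - p.2)).restrict]
      _ = (Γ.card : ℂ)⁻¹ * ∑ p ∈ Γ ×ˢ Γ,
            (if p.1 - p.2 ∈ M then (hM.toFinset.card : ℂ)⁻¹ else 0) := by
          simp_rw [setIntegral_bichar μ M hM]
      _ = (Γ.card : ℂ)⁻¹ * (((Γ ×ˢ Γ).filter (fun p => p.1 - p.2 ∈ M)).card : ℂ) *
            (hM.toFinset.card : ℂ)⁻¹ := by
          rw [← Finset.sum_filter, Finset.sum_const, nsmul_eq_mul]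
          ring
  have h2 : ((∫ τ in perpSet M, gfun Γ τ ∂μ : ℝ) : ℂ) =
      (Γ.card : ℂ)⁻¹ * (((Γ ×ˢ Γ).filter (fun p => p.1 - p.2 ∈ M)).card : ℂ) *
        (hM.toFinset.card : ℂ)⁻¹ := by
    rw [← hkey]
    exact (integral_ofReal (𝕜 := ℂ)).symm
  apply Complex.ofReal_injective
  rw [h2]
  push_cast
  ring
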